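/- For fixed real constants a > b > 0, define for each real λ with λ ≠ a and λ ≠ b the function K_λ(x, y, ẋ, ẏ) = ẋ²/(a−λ) + ẏ²/(b−λ) − (ẋy − ẏx)²/((a−λ)(b−λ)) on R⁴. Then for any two admissible parameters λ₁, λ₂, the canonical Poisson bracket {K_{λ₁}, K_{λ₂}} = (∂K_{λ₁}/∂x)(∂K_{λ₂}/∂ẋ) − (∂K_{λ₁}/∂ẋ)(∂K_{λ₂}/∂x) + (∂K_{λ₁}/∂y)(∂K_{λ₂}/∂ẏ) − (∂K_{λ₁}/∂ẏ)(∂K_{λ₂}/∂y) vanishes identically. -/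

import Mathlib

lemma dX (c d x y vx vy : ℝ) :
    deriv (fun x' : ℝ => vx ^ 2 / c + vy ^ 2 / d - (vx * y - vy * x') ^ 2 / (c * d)) x
      = 2 * vy * (vx * y - vy * x) / (c * d) := by
  have h1 : HasDerivAt (fun x' : ℝ => vx * y - vy * x') (-vy) x := by
    simpa using ((hasDerivAt_id x).const_mul vy).const_sub (vx * y)
  have h2 := ((h1.fun_pow 2).div_const (c * d)).const_sub (vx ^ 2 / c + vy ^ 2 / d)
  have h3 : HasDerivAt (fun x' : ℝ => vx ^ 2 / c + vy ^ 2 / d - (vx * y - vy * x') ^ 2 / (c * d))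
      (2 * vy * (vx * y - vy * x) / (c * d)) x := by
    exact h2.congr_deriv (by ring)
  exact h3.deriv

lemma dVX (c d x y vx vy : ℝ) :
    deriv (fun vx' : ℝ => vx' ^ 2 / c + vy ^ 2 / d - (vx' * y - vy * x) ^ 2 / (c * d)) vx
      = 2 * vx / c - 2 * y * (vx * y - vy * x) / (c * d) := by
  have h1 : HasDerivAt (fun vx' : ℝ => vx' * y - vy * x) y vx := by
    simpa using ((hasDerivAt_id vx).mul_const y).sub_const (vy * x)
  have h2 : HasDerivAt (fun vx' : ℝ => vx' ^ 2 / c) (2 * vx / c) vx := by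
    simpa using ((hasDerivAt_id vx).pow 2).div_const c
  have h3 := (h2.add_const (vy ^ 2 / d)).sub ((h1.fun_pow 2).div_const (c * d))
  have h4 : HasDerivAt (fun vx' : ℝ => vx' ^ 2 / c + vy ^ 2 / d - (vx' * y - vy * x) ^ 2 / (c * d))
      (2 * vx / c - 2 * y * (vx * y - vy * x) / (c * d)) vx := by
    exact h3.congr_deriv (by ring)
  exact h4.deriv

lemma dY (c d x y vx vy : ℝ) :
    deriv (fun y' : ℝ => vx ^ 2 / c + vy ^ 2 / d - (vx * y' - vy * x) ^ 2 / (c * d)) y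
      = -(2 * vx * (vx * y - vy * x)) / (c * d) := by
  have h1 : HasDerivAt (fun y' : ℝ => vx * y' - vy * x) vx y := by
    simpa using ((hasDerivAt_id y).const_mul vx).sub_const (vy * x)
  have h2 := ((h1.fun_pow 2).div_const (c * d)).const_sub (vx ^ 2 / c + vy ^ 2 / d)
  have h3 : HasDerivAt (fun y' : ℝ => vx ^ 2 / c + vy ^ 2 / d - (vx * y' - vy * x) ^ 2 / (c * d))
      (-(2 * vx * (vx * y - vy * x)) / (c * d)) y := by
    exact h2.congr_deriv (by ring)
  exact h3.deriv

lemma dVY (c d x y vx vy : ℝ) :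
    deriv (fun vy' : ℝ => vx ^ 2 / c + vy' ^ 2 / d - (vx * y - vy' * x) ^ 2 / (c * d)) vy
      = 2 * vy / d + 2 * x * (vx * y - vy * x) / (c * d) := by
  have h1 : HasDerivAt (fun vy' : ℝ => vx * y - vy' * x) (-x) vy := by
    simpa using ((hasDerivAt_id vy).mul_const x).const_sub (vx * y)
  have h2 : HasDerivAt (fun vy' : ℝ => vy' ^ 2 / d) (2 * vy / d) vy := by
    simpa using ((hasDerivAt_id vy).pow 2).div_const d
  have h3 := ((h2.const_add (vx ^ 2 / c)).sub ((h1.fun_pow 2).div_const (c * d)))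
  have h4 : HasDerivAt (fun vy' : ℝ => vx ^ 2 / c + vy' ^ 2 / d - (vx * y - vy' * x) ^ 2 / (c * d))
      (2 * vy / d + 2 * x * (vx * y - vy * x) / (c * d)) vy := by
    exact h3.congr_deriv (by ring)
  exact h4.deriv

theorem poisson_bracket_K_vanishes (a b : ℝ) (hab : a > b) (hb : b > 0)
    (l₁ l₂ : ℝ) (h₁a : l₁ ≠ a) (h₁b : l₁ ≠ b) (h₂a : l₂ ≠ a) (h₂b : l₂ ≠ b)
    (K : ℝ → ℝ → ℝ → ℝ → ℝ → ℝ)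
    (hK : ∀ l x y vx vy, K l x y vx vy =
      vx ^ 2 / (a - l) + vy ^ 2 / (b - l)
        - (vx * y - vy * x) ^ 2 / ((a - l) * (b - l))) :
    ∀ x y vx vy : ℝ,
      (deriv (fun x' => K l₁ x' y vx vy) x) * (deriv (fun vx' => K l₂ x y vx' vy) vx)
      - (deriv (fun vx' => K l₁ x y vx' vy) vx) * (deriv (fun x' => K l₂ x' y vx vy) x)
      + (deriv (fun y' => K l₁ x y' vx vy) y) * (deriv (fun vy' => K l₂ x y vx vy') vy)
      - (deriv (fun vy' => K l₁ x y vx vy') vy) * (deriv (fun y' => K l₂ x y' vx vy) y)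
      = 0 := by
  intro x y vx vy
  simp only [hK, dX, dVX, dY, dVY]
  have hA1 : a - l₁ ≠ 0 := sub_ne_zero.mpr (Ne.symm h₁a)
  have hB1 : b - l₁ ≠ 0 := sub_ne_zero.mpr (Ne.symm h₁b)
  have hA2 : a - l₂ ≠ 0 := sub_ne_zero.mpr (Ne.symm h₂a)
  have hB2 : b - l₂ ≠ 0 := sub_ne_zero.mpr (Ne.symm h₂b)
  field_simp
  ring
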